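/- If ρ and u solve the mass conservation equation ∂ₜρ + div(ρu) = 0 with ρ smooth and positive, and w = ∇φ(ρ) with φ'(r)√r = √(K(r)) and a(r) = √(K(r)·r), then w satisfies ∂ₜw + ∇(uᵀw) = −∇(a(ρ) div u). -/

import Mathlib

noncomputable def pd {n : ℕ} (i : Fin n) (f : (Fin n → ℝ) → ℝ) (x : Fin n → ℝ) : ℝ :=
  fderiv ℝ f x (Pi.single i 1)

lemma slice_t {n : ℕ} (F : ℝ × (Fin n → ℝ) → ℝ) {t : ℝ} {x : Fin n → ℝ}
    (hF : DifferentiableAt ℝ F (t, x)) :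
    deriv (fun s => F (s, x)) t = fderiv ℝ F (t, x) (1, 0) := by
  have h : HasFDerivAt (fun s : ℝ => (s, x)) (ContinuousLinearMap.inl ℝ ℝ (Fin n → ℝ)) t :=
    HasFDerivAt.prodMk (hasFDerivAt_id t) (hasFDerivAt_const x t)
  have := (hF.hasFDerivAt.comp t h).hasDerivAt
  simpa [Function.comp_def] using this.deriv

lemma slice_x {n : ℕ} (F : ℝ × (Fin n → ℝ) → ℝ) {t : ℝ} {x : Fin n → ℝ}
    (hF : DifferentiableAt ℝ F (t, x)) (i : Fin n) :
    pd i (fun y => F (t, y)) x = fderiv ℝ F (t, x) (0, Pi.single i 1) := by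
  have h : HasFDerivAt (fun y : Fin n → ℝ => (t, y)) (ContinuousLinearMap.inr ℝ ℝ (Fin n → ℝ)) x :=
    HasFDerivAt.prodMk (hasFDerivAt_const t x) (hasFDerivAt_id x)
  have := (hF.hasFDerivAt.comp x h).fderiv
  show fderiv ℝ (fun y => F (t, y)) x (Pi.single i 1) = _
  rw [show (fun y : Fin n → ℝ => F (t, y)) = F ∘ (fun y => (t, y)) from rfl, this]
  simp

lemma swap_fderiv {n : ℕ} (F : ℝ × (Fin n → ℝ) → ℝ) {p : ℝ × (Fin n → ℝ)}
    (hF : ContDiffAt ℝ 2 F p) (v w : ℝ × (Fin n → ℝ)) :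
    fderiv ℝ (fun q => fderiv ℝ F q v) p w = fderiv ℝ (fun q => fderiv ℝ F q w) p v := by
  have h1 : DifferentiableAt ℝ (fderiv ℝ F) p :=
    (hF.fderiv_right (m := 1) (by norm_num)).differentiableAt (by norm_num)
  have key : ∀ z : ℝ × (Fin n → ℝ), fderiv ℝ (fun q => fderiv ℝ F q z) p
      = (ContinuousLinearMap.apply ℝ ℝ z).comp (fderiv ℝ (fderiv ℝ F) p) := by
    intro z
    exact ((ContinuousLinearMap.apply ℝ ℝ z).hasFDerivAt.comp p h1.hasFDerivAt).fderiv
  rw [key v, key w]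
  simpa using (hF.isSymmSndFDerivAt (by norm_num)).eq w v

/-- If `∂ₜρ + div(ρu) = 0` and `w = ∇φ(ρ)` with `φ'(r)√r = √(K(r))`,
`a(r) = √(K(r)r)`, then `∂ₜw + ∇(uᵀw) = −∇(a(ρ) div u)`. -/
theorem extended_velocity_equation {n : ℕ}
    (ρ : ℝ → (Fin n → ℝ) → ℝ) (u : ℝ → (Fin n → ℝ) → (Fin n → ℝ)) (K φ : ℝ → ℝ)
    (hρ : ContDiff ℝ 2 (fun p : ℝ × (Fin n → ℝ) => ρ p.1 p.2))
    (hρpos : ∀ t x, 0 < ρ t x)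
    (hu : ContDiff ℝ 2 (fun p : ℝ × (Fin n → ℝ) => u p.1 p.2))
    (hK : ContDiffOn ℝ 1 K (Set.Ioi 0)) (hKpos : ∀ r > (0:ℝ), 0 < K r)
    (hφ : ContDiffOn ℝ 2 φ (Set.Ioi 0))
    (hφ' : ∀ r > (0:ℝ), deriv φ r * Real.sqrt r = Real.sqrt (K r))
    (a : ℝ → ℝ) (ha : ∀ r > (0:ℝ), a r = Real.sqrt (K r * r))
    (w : ℝ → (Fin n → ℝ) → (Fin n → ℝ))
    (hw : ∀ t x i, w t x i = pd i (fun y => φ (ρ t y)) x)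
    (hmass : ∀ t x,
      deriv (fun s => ρ s x) t + ∑ i, pd i (fun y => ρ t y * u t y i) x = 0) :
    ∀ (t : ℝ) (x : Fin n → ℝ) (i : Fin n),
      deriv (fun s => w s x i) t
        + pd i (fun y => ∑ j, u t y j * w t y j) x
      = - pd i (fun y => a (ρ t y) * ∑ j, pd j (fun z => u t z j) y) x := by
  intro t x i
  set F : ℝ × (Fin n → ℝ) → ℝ := fun p => φ (ρ p.1 p.2) with hFdef
  have hφat : ∀ r : ℝ, 0 < r → ContDiffAt ℝ 2 φ r := fun r hr =>
    hφ.contDiffAt (Ioi_mem_nhds hr)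
  have hF : ∀ p : ℝ × (Fin n → ℝ), ContDiffAt ℝ 2 F p := fun p =>
    (hφat _ (hρpos p.1 p.2)).comp p hρ.contDiffAt
  have hFd : ∀ p, DifferentiableAt ℝ F p := fun p => (hF p).differentiableAt (by norm_num)
  have hW : ∀ (v : ℝ × (Fin n → ℝ)) (p : ℝ × (Fin n → ℝ)),
      ContDiffAt ℝ 1 (fun q => fderiv ℝ F q v) p := fun v p =>
    ((ContinuousLinearMap.apply ℝ ℝ v).contDiff.contDiffAt).comp p
      ((hF p).fderiv_right (by norm_num))
  have hwF : ∀ s y (j : Fin n), w s y j = fderiv ℝ F (s, y) (0, Pi.single j 1) := by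
    intro s y j
    rw [hw]
    exact slice_x F (hFd (s, y)) j
  have hρslice : ContDiff ℝ 2 (fun z => ρ t z) := hρ.comp (contDiff_prodMk_right t)
  have huj : ∀ j : Fin n, ContDiff ℝ 2 (fun p : ℝ × (Fin n → ℝ) => u p.1 p.2 j) := fun j =>
    (ContinuousLinearMap.proj j : ((Fin n → ℝ) →L[ℝ] ℝ)).contDiff.comp hu
  have hujslice : ∀ j : Fin n, ContDiff ℝ 2 (fun z => u t z j) := fun j =>
    (huj j).comp (contDiff_prodMk_right t)
  -- pointwise identity
  have hpt : ∀ y : Fin n → ℝ,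
      fderiv ℝ F (t, y) (1, 0) + ∑ j, u t y j * w t y j
        = -(a (ρ t y) * ∑ j, pd j (fun z => u t z j) y) := by
    intro y
    have hr : 0 < ρ t y := hρpos t y
    have hφd : DifferentiableAt ℝ φ (ρ t y) := (hφat _ hr).differentiableAt (by norm_num)
    have hρtdiff : DifferentiableAt ℝ (fun s => ρ s y) t :=
      ((hρ.comp (contDiff_prodMk_left y)).differentiable (by norm_num)).differentiableAt
    have hT : fderiv ℝ F (t, y) (1, 0) = deriv φ (ρ t y) * deriv (fun s => ρ s y) t := by
      rw [← slice_t F (hFd _)]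
      exact deriv_comp t hφd hρtdiff
    have hwj : ∀ j, w t y j = deriv φ (ρ t y) * pd j (fun z => ρ t z) y := by
      intro j
      rw [hw]
      have hg : HasFDerivAt (fun z => ρ t z) (fderiv ℝ (fun z => ρ t z) y) y :=
        ((hρslice.differentiable (by norm_num)) y).hasFDerivAt
      have hc := hφd.hasDerivAt.comp_hasFDerivAt y hg
      show fderiv ℝ (fun z => φ (ρ t z)) y (Pi.single j 1) = _
      rw [show (fun z => φ (ρ t z)) = φ ∘ ρ t from rfl, hc.fderiv]
      simp [pd]
    have hprod : ∀ j : Fin n, pd j (fun z => ρ t z * u t z j) y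
        = u t y j * pd j (fun z => ρ t z) y + ρ t y * pd j (fun z => u t z j) y := by
      intro j
      have h1 : DifferentiableAt ℝ (fun z => ρ t z) y :=
        (hρslice.differentiable (by norm_num)) y
      have h2 : DifferentiableAt ℝ (fun z => u t z j) y :=
        ((hujslice j).differentiable (by norm_num)) y
      show fderiv ℝ (fun z => ρ t z * u t z j) y (Pi.single j 1) = _
      rw [fderiv_fun_mul h1 h2]
      simp [pd]
      ring
    have hm := hmass t y
    simp only [hprod] at hm
    have har : a (ρ t y) = deriv φ (ρ t y) * ρ t y := by
      rw [ha _ hr, Real.sqrt_mul (hKpos _ hr).le, ← hφ' _ hr, mul_assoc,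
        Real.mul_self_sqrt hr.le]
    rw [hT, har]
    have hsub : deriv (fun s => ρ s y) t
        = -∑ j, (u t y j * pd j (fun z => ρ t z) y + ρ t y * pd j (fun z => u t z j) y) := by
      linarith [hm]
    rw [hsub, Finset.sum_add_distrib]
    have e1 : ∑ j, u t y j * w t y j
        = deriv φ (ρ t y) * ∑ j, u t y j * pd j (fun z => ρ t z) y := by
      rw [Finset.mul_sum]
      exact Finset.sum_congr rfl fun j _ => by rw [hwj j]; ring
    rw [e1]
    have e2 : ∑ j, ρ t y * pd j (fun z => u t z j) y
        = ρ t y * ∑ j, pd j (fun z => u t z j) y := by rw [Finset.mul_sum]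
    rw [e2]
    ring
  -- differentiability of the slice functions at x
  have hslicediff : ∀ (v : ℝ × (Fin n → ℝ)),
      DifferentiableAt ℝ (fun y => fderiv ℝ F (t, y) v) x := fun v =>
    ((hW v (t, x)).differentiableAt (by norm_num)).comp x
      (DifferentiableAt.prodMk (differentiableAt_const t) differentiableAt_id)
  have hfe : (fun y => ∑ j, u t y j * w t y j)
      = fun y => ∑ j, u t y j * fderiv ℝ F (t, y) (0, Pi.single j 1) :=
    funext fun y => Finset.sum_congr rfl fun j _ => by rw [hwF]
  have hdiff2 : DifferentiableAt ℝ (fun y => ∑ j, u t y j * w t y j) x := by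
    rw [hfe]
    exact DifferentiableAt.fun_sum fun j _ =>
      (((hujslice j).differentiable (by norm_num)) x).mul (hslicediff _)
  -- main computation
  have step1 : deriv (fun s => w s x i) t
      = fderiv ℝ (fun q => fderiv ℝ F q ((0:ℝ), Pi.single i 1)) (t, x) (1, 0) := by
    have h : (fun s => w s x i) = fun s => fderiv ℝ F (s, x) ((0:ℝ), Pi.single i 1) :=
      funext fun s => hwF s x i
    rw [h]
    exact slice_t (fun q => fderiv ℝ F q ((0:ℝ), Pi.single i 1))
      ((hW _ (t, x)).differentiableAt (by norm_num))
  have step2 : fderiv ℝ (fun q => fderiv ℝ F q ((0:ℝ), Pi.single i 1)) (t, x) (1, 0)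
      = fderiv ℝ (fun q => fderiv ℝ F q ((1:ℝ), (0 : Fin n → ℝ))) (t, x) (0, Pi.single i 1) :=
    swap_fderiv F (hF _) _ _
  have step3 : fderiv ℝ (fun q => fderiv ℝ F q ((1:ℝ), (0 : Fin n → ℝ))) (t, x) (0, Pi.single i 1)
      = pd i (fun y => fderiv ℝ F (t, y) ((1:ℝ), (0 : Fin n → ℝ))) x :=
    (slice_x (fun q => fderiv ℝ F q ((1:ℝ), (0 : Fin n → ℝ)))
      ((hW _ (t, x)).differentiableAt (by norm_num)) i).symm
  rw [step1, step2, step3]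
  have hadd : pd i (fun y => fderiv ℝ F (t, y) ((1:ℝ), (0 : Fin n → ℝ))) x
      + pd i (fun y => ∑ j, u t y j * w t y j) x
      = pd i (fun y => fderiv ℝ F (t, y) ((1:ℝ), (0 : Fin n → ℝ))
          + ∑ j, u t y j * w t y j) x := by
    show fderiv ℝ _ x (Pi.single i 1) + fderiv ℝ _ x (Pi.single i 1)
      = fderiv ℝ _ x (Pi.single i 1)
    rw [fderiv_fun_add (hslicediff _) hdiff2]
    simp
  rw [hadd]
  have hfinal : (fun y => fderiv ℝ F (t, y) ((1:ℝ), (0 : Fin n → ℝ))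
      + ∑ j, u t y j * w t y j)
      = fun y => -(a (ρ t y) * ∑ j, pd j (fun z => u t z j) y) := funext hpt
  rw [hfinal]
  show fderiv ℝ _ x (Pi.single i 1) = -fderiv ℝ _ x (Pi.single i 1)
  rw [fderiv_fun_neg]
  simp
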